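/- For every γ ∈ (0,1] there exists a constant c₁ > 0 such that for every α ∈ (0,1] and every continuously differentiable function v : [0,1] → ℝ, ∫₀^1 v(x)² dx ≤ c₁ · ∫₀^1 ( α² v′(x)² + (x/α)^{2γ} v(x)² ) dx. -/

import Mathlib

open MeasureTheory Set

/-- Scaled Hardy-type inequality behind the eigenvalue lower bound: for
`γ ∈ (0,1]` there is `c₁ > 0` such that, for every scale `α ∈ (0,1]` and every
C¹ function `v` on `[0,1]`, `∫₀^1 v² ≤ c₁ ∫₀^1 (α² v'² + (x/α)^(2γ) v²)`. -/
theorem eigenvalue_lower_bound_scaled_inequality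
    (γ : ℝ) (hγ : γ ∈ Set.Ioc (0 : ℝ) 1) :
    ∃ c₁ > 0, ∀ α ∈ Set.Ioc (0 : ℝ) 1, ∀ v v' : ℝ → ℝ,
      (∀ x ∈ Set.Icc (0 : ℝ) 1, HasDerivWithinAt v (v' x) (Set.Icc (0 : ℝ) 1) x) →
      ContinuousOn v' (Set.Icc (0 : ℝ) 1) →
      (∫ x in Set.Ioo (0 : ℝ) 1, (v x) ^ 2)
        ≤ c₁ * ∫ x in Set.Ioo (0 : ℝ) 1,
            (α ^ 2 * (v' x) ^ 2 + (x / α) ^ (2 * γ) * (v x) ^ 2) := by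
  obtain ⟨hγ0, hγ1⟩ := hγ
  refine ⟨17, by norm_num, ?_⟩
  rintro α ⟨hα0, hα1⟩ v v' hv hv'
  have hvc : ContinuousOn v (Set.Icc 0 1) := fun x hx => (hv x hx).continuousWithinAt
  -- continuity of the weight
  have hwc : Continuous fun x : ℝ => (x / α) ^ (2 * γ) := by
    rw [continuous_iff_continuousAt]
    intro x
    exact (Real.continuousAt_rpow_const _ _ (Or.inr (by positivity))).comp
      ((continuous_id.div_const α).continuousAt)
  -- basic interval integrability facts
  have hsub : ∀ a b : ℝ, a ∈ Set.Icc (0:ℝ) 1 → b ∈ Set.Icc (0:ℝ) 1 →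
      Set.uIcc a b ⊆ Set.Icc (0:ℝ) 1 := fun a b ha hb => Set.uIcc_subset_Icc ha hb
  have hv2int : ∀ a b : ℝ, a ∈ Set.Icc (0:ℝ) 1 → b ∈ Set.Icc (0:ℝ) 1 →
      IntervalIntegrable (fun x => (v x) ^ 2) volume a b := fun a b ha hb =>
    ((hvc.mono (hsub a b ha hb)).pow 2).intervalIntegrable
  have hv'2int : ∀ a b : ℝ, a ∈ Set.Icc (0:ℝ) 1 → b ∈ Set.Icc (0:ℝ) 1 →
      IntervalIntegrable (fun x => (v' x) ^ 2) volume a b := fun a b ha hb =>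
    ((hv'.mono (hsub a b ha hb)).pow 2).intervalIntegrable
  have hgint : ∀ a b : ℝ, a ∈ Set.Icc (0:ℝ) 1 → b ∈ Set.Icc (0:ℝ) 1 →
      IntervalIntegrable (fun x => (x / α) ^ (2 * γ) * (v x) ^ 2) volume a b := fun a b ha hb =>
    ((hwc.continuousOn.mono (hsub a b ha hb)).mul ((hvc.mono (hsub a b ha hb)).pow 2)).intervalIntegrable
  have hα01 : α ∈ Set.Icc (0:ℝ) 1 := ⟨hα0.le, hα1⟩
  have hα2 : α / 2 ∈ Set.Icc (0:ℝ) 1 := ⟨by linarith, by linarith⟩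
  have h0m : (0:ℝ) ∈ Set.Icc (0:ℝ) 1 := ⟨le_refl 0, by norm_num⟩
  have h1m : (1:ℝ) ∈ Set.Icc (0:ℝ) 1 := ⟨by norm_num, le_refl 1⟩
  set A := ∫ t in (0:ℝ)..α, (v' t) ^ 2 with hA
  set B := ∫ t in (0:ℝ)..α, (v t) ^ 2 with hB
  -- FTC for v^2
  have ftc : ∀ x y : ℝ, 0 ≤ x → x ≤ y → y ≤ 1 →
      (∫ t in x..y, 2 * v t * v' t) = (v y) ^ 2 - (v x) ^ 2 := by
    intro x y hx hxy hy
    have hxm : x ∈ Set.Icc (0:ℝ) 1 := ⟨hx, by linarith⟩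
    have hym : y ∈ Set.Icc (0:ℝ) 1 := ⟨by linarith, hy⟩
    apply intervalIntegral.integral_eq_sub_of_hasDeriv_right_of_le hxy
    · exact (hvc.mono (Set.Icc_subset_Icc hx hy)).pow 2
    · intro t ht
      have ht' : t ∈ Set.Ioo (0:ℝ) 1 := ⟨by linarith [ht.1], by linarith [ht.2]⟩
      have hdt : HasDerivAt v (v' t) t :=
        (hv t ⟨ht'.1.le, ht'.2.le⟩).hasDerivAt (Icc_mem_nhds ht'.1 ht'.2)
      have := (hdt.pow 2).hasDerivWithinAt (s := Set.Ioi t)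
      convert this using 1 <;> first | rfl | simp
    · apply ContinuousOn.intervalIntegrable
      have hs := hsub x y hxm hym
      exact (continuousOn_const.mul (hvc.mono hs)).mul (hv'.mono hs)
  -- pointwise bound on [0, α]
  have key : ∀ x ∈ Set.Icc (0:ℝ) α, ∀ y ∈ Set.Icc (0:ℝ) α,
      (v x) ^ 2 ≤ (v y) ^ 2 + (2 * α * A + (1 / (2 * α)) * B) := by
    intro x hx y hy
    have hxm : x ∈ Set.Icc (0:ℝ) 1 := ⟨hx.1, le_trans hx.2 hα1⟩
    have hym : y ∈ Set.Icc (0:ℝ) 1 := ⟨hy.1, le_trans hy.2 hα1⟩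
    -- the integral ∫_{x∧y}^{x∨y} |2 v v'| is bounded by 2αA + B/(2α)
    have main : ∀ a b : ℝ, 0 ≤ a → a ≤ b → b ≤ α →
        (∫ t in a..b, |2 * v t * v' t|) ≤ 2 * α * A + (1 / (2 * α)) * B := by
      intro a b ha hab hbα
      have ham : a ∈ Set.Icc (0:ℝ) 1 := ⟨ha, by linarith⟩
      have hbm : b ∈ Set.Icc (0:ℝ) 1 := ⟨by linarith, by linarith⟩
      have step1 : (∫ t in a..b, |2 * v t * v' t|)
          ≤ ∫ t in a..b, (2 * α * (v' t) ^ 2 + (1 / (2 * α)) * (v t) ^ 2) := by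
        apply intervalIntegral.integral_mono_on hab
        · apply ContinuousOn.intervalIntegrable
          have hs := hsub a b ham hbm
          exact ((continuousOn_const.mul (hvc.mono hs)).mul (hv'.mono hs)).abs
        · exact (((hv'2int a b ham hbm).const_mul _).add ((hv2int a b ham hbm).const_mul _))
        · intro t ht
          have h1 : |2 * v t * v' t| = 2 * |v t| * |v' t| := by
            rw [abs_mul, abs_mul]; simp [abs_of_nonneg]
          rw [h1]
          have h2a : (0:ℝ) < 2 * α := by linarith
          rw [← mul_le_mul_iff_of_pos_left h2a]
          have hx : 2 * α * (2 * α * (v' t) ^ 2 + 1 / (2 * α) * (v t) ^ 2)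
              = 4 * α ^ 2 * (v' t) ^ 2 + (v t) ^ 2 := by
            field_simp; ring
          rw [hx]
          nlinarith [sq_nonneg (2 * α * |v' t| - |v t|), sq_abs (v t), sq_abs (v' t),
            abs_nonneg (v t), abs_nonneg (v' t)]
      have step2 : (∫ t in a..b, (2 * α * (v' t) ^ 2 + (1 / (2 * α)) * (v t) ^ 2))
          ≤ ∫ t in (0:ℝ)..α, (2 * α * (v' t) ^ 2 + (1 / (2 * α)) * (v t) ^ 2) := by
        apply intervalIntegral.integral_mono_interval ha hab hbα
        · filter_upwards with t
          have : 0 < 1 / (2 * α) := by positivity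
          positivity
        · exact (((hv'2int 0 α h0m hα01).const_mul _).add ((hv2int 0 α h0m hα01).const_mul _))
      have step3 : (∫ t in (0:ℝ)..α, (2 * α * (v' t) ^ 2 + (1 / (2 * α)) * (v t) ^ 2))
          = 2 * α * A + (1 / (2 * α)) * B := by
        rw [intervalIntegral.integral_add ((hv'2int 0 α h0m hα01).const_mul _)
          ((hv2int 0 α h0m hα01).const_mul _), intervalIntegral.integral_const_mul,
          intervalIntegral.integral_const_mul]
      linarith
    rcases le_total x y with hxy | hyx
    · have h := ftc x y hx.1 hxy (le_trans hy.2 hα1)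
      have habs : -(∫ t in x..y, 2 * v t * v' t) ≤ ∫ t in x..y, |2 * v t * v' t| := by
        have := intervalIntegral.abs_integral_le_integral_abs (μ := volume)
          (f := fun t => 2 * v t * v' t) (a := x) (b := y) hxy
        have h2 := neg_abs_le (∫ t in x..y, 2 * v t * v' t)
        linarith
      have := main x y hx.1 hxy hy.2
      nlinarith [h]
    · have h := ftc y x hy.1 hyx (le_trans hx.2 hα1)
      have habs : (∫ t in y..x, 2 * v t * v' t) ≤ ∫ t in y..x, |2 * v t * v' t| := by
        have := intervalIntegral.abs_integral_le_integral_abs (μ := volume)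
          (f := fun t => 2 * v t * v' t) (a := y) (b := x) hyx
        have h2 := le_abs_self (∫ t in y..x, 2 * v t * v' t)
        linarith
      have := main y x hy.1 hyx hx.2
      nlinarith [h]
  -- Step 2: B ≤ 2α v(y)^2 + 4α² A for y ∈ [α/2, α]
  have step2 : ∀ y ∈ Set.Icc (α/2) α, B - 4 * α ^ 2 * A ≤ 2 * α * (v y) ^ 2 := by
    intro y hy
    have hym : y ∈ Set.Icc (0:ℝ) α := ⟨by linarith [hy.1], hy.2⟩
    have hC : B ≤ α * ((v y) ^ 2 + (2 * α * A + (1 / (2 * α)) * B)) := by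
      have hmono : B ≤ ∫ _ in (0:ℝ)..α, ((v y) ^ 2 + (2 * α * A + (1 / (2 * α)) * B)) := by
        apply intervalIntegral.integral_mono_on hα0.le (hv2int 0 α h0m hα01)
          intervalIntegrable_const
        intro x hx
        exact key x hx y hym
      rwa [intervalIntegral.integral_const, smul_eq_mul, sub_zero] at hmono
    have hne : α ≠ 0 := ne_of_gt hα0
    have hexp : α * ((v y) ^ 2 + (2 * α * A + (1 / (2 * α)) * B))
        = α * (v y) ^ 2 + 2 * α ^ 2 * A + B / 2 := by
      field_simp; ring
    rw [hexp] at hC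
    linarith
  -- Step 3: integrate over y ∈ [α/2, α]
  have step3 : B - 4 * α ^ 2 * A ≤ 4 * ∫ y in (α/2)..α, (v y) ^ 2 := by
    have hle : α / 2 ≤ α := by linarith
    have hmono : (∫ _ in (α/2)..α, (B - 4 * α ^ 2 * A)) ≤ ∫ y in (α/2)..α, 2 * α * (v y) ^ 2 := by
      apply intervalIntegral.integral_mono_on hle intervalIntegrable_const
        ((hv2int _ _ hα2 hα01).const_mul _)
      intro y hy
      exact step2 y hy
    rw [intervalIntegral.integral_const, smul_eq_mul,
      intervalIntegral.integral_const_mul] at hmono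
    nlinarith [hmono]
  -- Step 4: on [α/2, α], the weight is ≥ 1/4
  have step4 : (∫ y in (α/2)..α, (v y) ^ 2)
      ≤ 4 * ∫ y in (α/2)..α, (y / α) ^ (2 * γ) * (v y) ^ 2 := by
    have hle : α / 2 ≤ α := by linarith
    have hmono : (∫ y in (α/2)..α, (v y) ^ 2)
        ≤ ∫ y in (α/2)..α, 4 * ((y / α) ^ (2 * γ) * (v y) ^ 2) := by
      apply intervalIntegral.integral_mono_on hle (hv2int _ _ hα2 hα01)
        ((hgint _ _ hα2 hα01).const_mul _)
      intro y hy
      have h12 : (1:ℝ)/2 ≤ y / α := by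
        rw [le_div_iff₀ hα0]; linarith [hy.1]
      have hw1 : ((1:ℝ)/2) ^ (2*γ) ≤ (y / α) ^ (2 * γ) :=
        Real.rpow_le_rpow (by norm_num) h12 (by positivity)
      have hw2 : ((1:ℝ)/4) ≤ ((1:ℝ)/2) ^ (2*γ) := by
        have := Real.rpow_le_rpow_of_exponent_ge (x := (1:ℝ)/2) (by norm_num) (by norm_num)
          (by linarith : 2 * γ ≤ (2:ℝ))
        have h4 : ((1:ℝ)/2) ^ (2:ℝ) = 1/4 := by
          rw [show (2:ℝ) = ((2:ℕ):ℝ) by norm_num, Real.rpow_natCast]; norm_num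
        linarith
      nlinarith [sq_nonneg (v y)]
    rw [intervalIntegral.integral_const_mul] at hmono
    linarith
  -- Step 5: on [α, 1], the weight is ≥ 1
  have step5 : (∫ x in α..1, (v x) ^ 2) ≤ ∫ x in α..1, (x / α) ^ (2 * γ) * (v x) ^ 2 := by
    apply intervalIntegral.integral_mono_on hα1 (hv2int _ _ hα01 h1m) (hgint _ _ hα01 h1m)
    intro x hx
    have h1x : (1:ℝ) ≤ x / α := by rw [le_div_iff₀ hα0]; linarith [hx.1]
    have hw1 : (1:ℝ) ≤ (x / α) ^ (2 * γ) := Real.one_le_rpow h1x (by positivity)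
    nlinarith [sq_nonneg (v x)]
  -- nonnegativity of weight on (0, ∞)
  have hgnn : ∀ c d : ℝ, 0 ≤ c →
      0 ≤ᵐ[volume.restrict (Set.Ioc c d)] fun x => (x / α) ^ (2 * γ) * (v x) ^ 2 := by
    intro c d hc
    filter_upwards [ae_restrict_mem measurableSet_Ioc] with x hx
    have hx0 : 0 < x := lt_of_le_of_lt hc hx.1
    have : (0:ℝ) ≤ (x / α) ^ (2 * γ) := Real.rpow_nonneg (by positivity) _
    positivity
  -- interval inclusions into [0,1] for the two RHS pieces
  have hsub1 : (∫ y in (α/2)..α, (y / α) ^ (2 * γ) * (v y) ^ 2)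
      ≤ ∫ x in (0:ℝ)..1, (x / α) ^ (2 * γ) * (v x) ^ 2 :=
    intervalIntegral.integral_mono_interval (by linarith) (by linarith) hα1
      (hgnn 0 1 le_rfl) (hgint 0 1 h0m h1m)
  have hsub2 : (∫ x in α..1, (x / α) ^ (2 * γ) * (v x) ^ 2)
      ≤ ∫ x in (0:ℝ)..1, (x / α) ^ (2 * γ) * (v x) ^ 2 :=
    intervalIntegral.integral_mono_interval hα0.le hα1 le_rfl
      (hgnn 0 1 le_rfl) (hgint 0 1 h0m h1m)
  have hsubA : α ^ 2 * A ≤ ∫ x in (0:ℝ)..1, α ^ 2 * (v' x) ^ 2 := by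
    have : (∫ t in (0:ℝ)..α, α ^ 2 * (v' t) ^ 2) ≤ ∫ x in (0:ℝ)..1, α ^ 2 * (v' x) ^ 2 := by
      apply intervalIntegral.integral_mono_interval le_rfl hα0.le hα1
      · filter_upwards with t; positivity
      · exact (hv'2int 0 1 h0m h1m).const_mul _
    rwa [intervalIntegral.integral_const_mul] at this
  -- split the LHS
  have hBsplit : (∫ x in (0:ℝ)..1, (v x) ^ 2) = B + ∫ x in α..1, (v x) ^ 2 :=
    (intervalIntegral.integral_add_adjacent_intervals (hv2int 0 α h0m hα01)
      (hv2int α 1 hα01 h1m)).symm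
  -- split the RHS
  have hIsplit : (∫ x in (0:ℝ)..1, (α ^ 2 * (v' x) ^ 2 + (x / α) ^ (2 * γ) * (v x) ^ 2))
      = (∫ x in (0:ℝ)..1, α ^ 2 * (v' x) ^ 2)
        + ∫ x in (0:ℝ)..1, (x / α) ^ (2 * γ) * (v x) ^ 2 :=
    intervalIntegral.integral_add ((hv'2int 0 1 h0m h1m).const_mul _) (hgint 0 1 h0m h1m)
  have hIα2nn : 0 ≤ ∫ x in (0:ℝ)..1, α ^ 2 * (v' x) ^ 2 := by
    apply intervalIntegral.integral_nonneg (by norm_num)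
    intro x _; positivity
  -- convert set integrals over Ioo to interval integrals
  have hconv : ∀ f : ℝ → ℝ, (∫ x in Set.Ioo (0:ℝ) 1, f x) = ∫ x in (0:ℝ)..1, f x := by
    intro f
    rw [intervalIntegral.integral_of_le (by norm_num : (0:ℝ) ≤ 1),
      MeasureTheory.integral_Ioc_eq_integral_Ioo]
  rw [hconv, hconv, hIsplit, hBsplit]
  linarith [step3, step4, step5, hsub1, hsub2, hsubA, hIα2nn]
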